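/- arXiv:0902.2054 — 3 statements merged into one kernel-verified Lean document; each statement's English description precedes it below -/
import Mathlib

section
/- For n ≥ 3 and x ∈ ℝⁿ with x ≠ 0, the Newton (harmonic) potential of the Gaussian satisfies (Γ(n/2−1)/(4π^{n/2})) ∫_{ℝⁿ} e^{−|y|²} / |x−y|^{n−2} dy = (1/(4|x|^{n−2})) · γ(n/2 − 1, |x|²), where γ is the lower incomplete Gamma function. -/
open Real MeasureTheory Set

lemma aux_integrableOn_rpow_exp {a r : ℝ} (ha : 0 < a) (hr : 0 < r) :
    IntegrableOn (fun s : ℝ => s ^ (a - 1) * Real.exp (-(r * s))) (Ioi 0) := by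
  have h0 : IntegrableOn (fun u : ℝ => Real.exp (-u) * u ^ (a - 1)) (Ioi 0) :=
    Real.GammaIntegral_convergent ha
  have h1 : IntegrableOn (fun s : ℝ => Real.exp (-(r * s)) * (r * s) ^ (a - 1)) (Ioi 0) := by
    have := (integrableOn_Ioi_comp_mul_left_iff (fun u : ℝ => Real.exp (-u) * u ^ (a - 1)) 0 hr).2
    simpa using this (by simpa using h0)
  have h2 := h1.const_mul (r ^ (1 - a))
  refine (integrableOn_congr_fun (fun s hs => ?_) measurableSet_Ioi).2 h2
  have hs0 : (0:ℝ) < s := hs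
  rw [Real.mul_rpow hr.le hs0.le]
  have : r ^ (1 - a) * r ^ (a - 1) = 1 := by
    rw [← Real.rpow_add hr]; norm_num
  rw [show r ^ (1-a) * (rexp (-(r*s)) * (r^(a-1) * s^(a-1)))
      = (r^(1-a)*r^(a-1)) * (s^(a-1)*rexp (-(r*s))) from by ring, this, one_mul]

lemma aux_image {R : ℝ} (hR : 0 < R) :
    (fun τ : ℝ => τ / (R - τ)) '' Ioo 0 R = Ioi 0 := by
  ext s
  constructor
  · rintro ⟨τ, ⟨h1, h2⟩, rfl⟩
    exact div_pos h1 (by linarith)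
  · intro hs
    have hs0 : (0:ℝ) < s := hs
    refine ⟨s * R / (1 + s), ⟨by positivity, ?_⟩, ?_⟩
    · rw [div_lt_iff₀ (by positivity)]; nlinarith
    · have h1s : (0:ℝ) < 1 + s := by linarith
      field_simp
      ring

lemma aux_inj {R : ℝ} (hR : 0 < R) : InjOn (fun τ : ℝ => τ / (R - τ)) (Ioo 0 R) := by
  intro τ hτ σ hσ h
  simp only at h
  have h1 : R - τ ≠ 0 := by have := hτ.2; intro h'; linarith
  have h2 : R - σ ≠ 0 := by have := hσ.2; intro h'; linarith
  field_simp at h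
  nlinarith [h]

lemma aux_deriv {R : ℝ} (hR : 0 < R) {τ : ℝ} (hτ : τ ∈ Ioo 0 R) :
    HasDerivWithinAt (fun τ : ℝ => τ / (R - τ)) (R / (R - τ)^2) (Ioo 0 R) τ := by
  have h1 : R - τ ≠ 0 := by have := hτ.2; intro h'; linarith
  have := (hasDerivAt_id τ).div ((hasDerivAt_const τ R).sub (hasDerivAt_id τ)) h1
  refine this.hasDerivWithinAt.congr_deriv ?_
  simp only [Pi.sub_apply, id]
  ring

lemma aux_pointwise {a R : ℝ} (ha : 0 < a) (hR : 0 < R) {τ : ℝ} (hτ : τ ∈ Ioo 0 R) :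
    |R / (R - τ)^2| •
      ((τ / (R - τ)) ^ (a-1) * (π / (1 + τ / (R - τ))) ^ (a+1) *
        Real.exp (-((τ / (R - τ)) * R / (1 + τ / (R - τ)))))
      = π ^ (a+1) * R ^ (-a) * (τ ^ (a-1) * Real.exp (-τ)) := by
  obtain ⟨hτ0, hτR⟩ := hτ
  set t := R - τ with htdef
  have ht : 0 < t := by simp [htdef]; linarith
  have hφ1 : 1 + τ / t = R / t := by field_simp; ring
  have hφ2 : π / (R / t) = π * t / R := by field_simp
  have hφ3 : (τ / t) * R / (R / t) = τ := by field_simp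
  have e1 : t ^ (a+1) = t ^ (a-1) * t ^ 2 := by
    rw [← Real.rpow_natCast t 2, ← Real.rpow_add ht]; norm_num; ring_nf
  have e2 : R ^ (a+1) = R ^ a * R := Real.rpow_add_one hR.ne' a
  have e3 : R ^ (-a) = (R ^ a)⁻¹ := by rw [Real.rpow_neg hR.le]
  have h1 : ((τ/t):ℝ) ^ (a-1) = τ ^ (a-1) * (t ^ (a-1))⁻¹ := by
    rw [Real.div_rpow hτ0.le ht.le, div_eq_mul_inv]
  have h2 : (π * t / R) ^ (a+1) = π ^ (a+1) * (t ^ (a-1) * t ^ 2) * (R ^ a * R)⁻¹ := by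
    rw [Real.div_rpow (by positivity) hR.le, Real.mul_rpow pi_pos.le ht.le, ← e1, ← e2,
      div_eq_mul_inv]
  have habs : |R / t ^ 2| = R / t ^ 2 := abs_of_pos (by positivity)
  simp only [smul_eq_mul, hφ1, hφ2, hφ3, habs, h1, h2, e3]
  have ht1 : t ^ (a-1) ≠ 0 := by positivity
  have hRa : R ^ a ≠ 0 := by positivity
  field_simp

lemma aux_tau_integrable {a R : ℝ} (ha : 0 < a) :
    IntegrableOn (fun τ : ℝ => τ ^ (a-1) * Real.exp (-τ)) (Ioo 0 R) := by
  refine ((Real.GammaIntegral_convergent ha).mono_set Ioo_subset_Ioi_self).congr_fun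
    (fun τ _ => by ring) measurableSet_Ioo

lemma aux_g_integrable {a R : ℝ} (ha : 0 < a) (hR : 0 < R) :
    IntegrableOn (fun s : ℝ =>
      s ^ (a-1) * (π / (1+s)) ^ (a+1) * Real.exp (-(s * R / (1+s)))) (Ioi 0) := by
  rw [← aux_image hR, integrableOn_image_iff_integrableOn_abs_deriv_smul measurableSet_Ioo
    (fun τ hτ => aux_deriv hR hτ) (aux_inj hR)]
  refine (integrableOn_congr_fun (fun τ hτ => ?_) measurableSet_Ioo).2
    ((aux_tau_integrable (R := R) ha).const_mul (π ^ (a+1) * R ^ (-a)))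
  rw [← aux_pointwise ha hR hτ]

lemma aux_subst {a R : ℝ} (ha : 0 < a) (hR : 0 < R) :
    ∫ s in Ioi (0:ℝ), s ^ (a-1) * (π / (1+s)) ^ (a+1) * Real.exp (-(s * R / (1+s)))
      = π ^ (a+1) * R ^ (-a) * ∫ τ in Ioo (0:ℝ) R, τ ^ (a-1) * Real.exp (-τ) := by
  rw [← aux_image hR, integral_image_eq_integral_abs_deriv_smul measurableSet_Ioo
    (fun τ hτ => aux_deriv hR hτ) (aux_inj hR), ← integral_const_mul]
  exact setIntegral_congr_fun measurableSet_Ioo fun τ hτ => aux_pointwise ha hR hτ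

section auxE
variable {n : ℕ}
local notation "E" => EuclideanSpace ℝ (Fin n)

lemma aux_gauss_integrable {b : ℝ} (hb : 0 < b) (c : E) :
    Integrable (fun y : E => Real.exp (-(b * ‖y - c‖ ^ 2))) := by
  have h := GaussianFourier.integrable_cexp_neg_mul_sq_norm_add (V := E) (b := (b:ℂ))
    (by simpa using hb) 0 0
  have h2 : Integrable (fun y : E => Real.exp (-(b * ‖y‖ ^ 2))) := by
    have := h.norm
    refine this.congr (Filter.Eventually.of_forall fun y => ?_)
    simp only [zero_mul, add_zero, Complex.norm_exp]
    congr 1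
    rw [show -(b:ℂ) * (‖y‖:ℂ)^2 = ((-(b * ‖y‖^2) : ℝ) : ℂ) by push_cast; ring,
      Complex.ofReal_re]
  exact h2.comp_sub_right c

lemma aux_gauss_integral {b : ℝ} (hb : 0 < b) (c : E) :
    ∫ y : E, Real.exp (-(b * ‖y - c‖ ^ 2)) = (π / b) ^ ((n : ℝ) / 2) := by
  rw [integral_sub_right_eq_self (fun y : E => Real.exp (-(b * ‖y‖ ^ 2))) c]
  have := GaussianFourier.integral_rexp_neg_mul_sq_norm (V := E) hb
  simp only [neg_mul] at this ⊢
  rw [this, finrank_euclideanSpace, Fintype.card_fin]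

lemma aux_pow (hn : 3 ≤ n) (w : ℝ) (hw : 0 ≤ w) :
    (w ^ 2) ^ ((n:ℝ)/2 - 1) = w ^ (n - 2) := by
  rw [← Real.rpow_natCast w (n-2), ← Real.rpow_natCast w 2, ← Real.rpow_mul hw]
  congr 1
  push_cast [Nat.cast_sub (by omega : 2 ≤ n)]
  ring

lemma aux_sq_key (x y : E) {s : ℝ} (hs : 0 < s) :
    ‖x - y‖ ^ 2 * s + ‖y‖ ^ 2
      = (1+s) * ‖y - (s/(1+s)) • x‖ ^ 2 + s * ‖x‖^2 / (1+s) := by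
  have h1s : (0:ℝ) < 1 + s := by linarith
  have e1 : ‖x - y‖ ^ 2 = ‖x‖^2 - 2 * inner ℝ x y + ‖y‖^2 := norm_sub_sq_real x y
  have e2 : ‖y - (s/(1+s)) • x‖ ^ 2
      = ‖y‖^2 - 2 * ((s/(1+s)) * inner ℝ x y) + (s/(1+s))^2 * ‖x‖^2 := by
    rw [norm_sub_sq_real, real_inner_smul_right, real_inner_comm, norm_smul,
      Real.norm_eq_abs, mul_pow, sq_abs]
  rw [e1, e2]
  field_simp
  ring

end auxE

/-- The lower incomplete Gamma function `γ(a, x) = ∫_0^x τ^(a-1) e^(-τ) dτ`. -/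
noncomputable def lowerGamma (a x : ℝ) : ℝ :=
  ∫ τ in (0:ℝ)..x, τ ^ (a - 1) * Real.exp (-τ)

/-- The harmonic (Newton) potential of the Gaussian `e^(-|y|²)` in ℝⁿ, n ≥ 3. -/
theorem harmonic_potential_of_gaussian (n : ℕ) (hn : 3 ≤ n)
    (x : EuclideanSpace ℝ (Fin n)) (hx : x ≠ 0) :
    (Real.Gamma ((n : ℝ) / 2 - 1) / (4 * π ^ ((n : ℝ) / 2))) *
        ∫ y : EuclideanSpace ℝ (Fin n), Real.exp (-‖y‖ ^ 2) / ‖x - y‖ ^ (n - 2) =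
      (1 / (4 * ‖x‖ ^ (n - 2))) * lowerGamma ((n : ℝ) / 2 - 1) (‖x‖ ^ 2) := by
  have hnorm : 0 < ‖x‖ := norm_pos_iff.2 hx
  set a : ℝ := (n:ℝ)/2 - 1 with ha_def
  have hn3 : (3:ℝ) ≤ (n:ℝ) := by exact_mod_cast hn
  have ha : 0 < a := by rw [ha_def]; linarith
  set R : ℝ := ‖x‖^2 with hR_def
  have hR : 0 < R := by rw [hR_def]; positivity
  have hΓ : 0 < Real.Gamma a := Real.Gamma_pos_of_pos ha
  have key : (∫ y : EuclideanSpace ℝ (Fin n), Real.exp (-‖y‖ ^ 2) / ‖x - y‖ ^ (n - 2))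
      = (Real.Gamma a)⁻¹ * (π^(a+1) * (R^(-a) * lowerGamma a R)) := by
    have hmeas : AEStronglyMeasurable
        (fun y : EuclideanSpace ℝ (Fin n) => Real.exp (-‖y‖ ^ 2) / ‖x - y‖ ^ (n - 2))
        volume := by
      refine (Measurable.div ?_ ?_).aestronglyMeasurable
      · exact (measurable_norm.pow_const 2).neg.exp
      · exact ((measurable_const.sub measurable_id).norm.pow_const (n-2))
    rw [integral_eq_lintegral_of_nonneg_ae
      (Filter.Eventually.of_forall fun y => by positivity) hmeas]
    have L1 : ∫⁻ y : EuclideanSpace ℝ (Fin n),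
          ENNReal.ofReal (Real.exp (-‖y‖ ^ 2) / ‖x - y‖ ^ (n - 2))
        = ∫⁻ y : EuclideanSpace ℝ (Fin n), ∫⁻ s in Ioi (0:ℝ),
            ENNReal.ofReal ((Real.Gamma a)⁻¹ *
              (s^(a-1) * Real.exp (-(‖x - y‖^2 * s)) * Real.exp (-‖y‖^2))) := by
      refine lintegral_congr_ae ?_
      have hxy : ∀ᵐ y : EuclideanSpace ℝ (Fin n), y ≠ x := by
        refine ae_iff.2 ?_
        haveI : Nonempty (Fin n) := ⟨⟨0, by omega⟩⟩
        haveI : Nontrivial (EuclideanSpace ℝ (Fin n)) :=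
          inferInstance
        have h0 : (volume : Measure (EuclideanSpace ℝ (Fin n))) {x} = 0 := measure_singleton x
        convert h0 using 2
        ext y; simp
      filter_upwards [hxy] with y hy
      have hxyne : x - y ≠ 0 := sub_ne_zero.2 (Ne.symm hy)
      have hr : 0 < ‖x - y‖^2 := by
        have : 0 < ‖x - y‖ := norm_pos_iff.2 hxyne
        positivity
      have hint : Integrable (fun s : ℝ => (Real.Gamma a)⁻¹ *
          (s^(a-1) * Real.exp (-(‖x - y‖^2 * s)) * Real.exp (-‖y‖^2)))
          (volume.restrict (Ioi 0)) := by
        exact (((aux_integrableOn_rpow_exp ha hr).mul_const _).const_mul _)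
      rw [← ofReal_integral_eq_lintegral_ofReal hint
        ((ae_restrict_iff' measurableSet_Ioi).2 (Filter.Eventually.of_forall fun s hs => by
          have hs0 : (0:ℝ) < s := hs
          positivity))]
      congr 1
      rw [integral_const_mul, integral_mul_const, integral_rpow_mul_exp_neg_mul_Ioi ha hr,
        one_div, Real.inv_rpow hr.le, aux_pow hn _ (norm_nonneg _)]
      field_simp
    rw [L1]
    rw [lintegral_lintegral_swap (by fun_prop)]
    have L3 : ∀ s ∈ Ioi (0:ℝ), (∫⁻ y : EuclideanSpace ℝ (Fin n),
          ENNReal.ofReal ((Real.Gamma a)⁻¹ *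
            (s^(a-1) * Real.exp (-(‖x - y‖^2 * s)) * Real.exp (-‖y‖^2))))
        = ENNReal.ofReal ((Real.Gamma a)⁻¹ *
            (s^(a-1) * (π/(1+s))^(a+1) * Real.exp (-(s*R/(1+s))))) := by
      intro s hs
      have hs0 : (0:ℝ) < s := hs
      have h1s : (0:ℝ) < 1 + s := by linarith
      have step : ∀ y : EuclideanSpace ℝ (Fin n),
          (Real.Gamma a)⁻¹ * (s^(a-1) * Real.exp (-(‖x - y‖^2 * s)) * Real.exp (-‖y‖^2))
          = ((Real.Gamma a)⁻¹ * s^(a-1) * Real.exp (-(s*R/(1+s)))) *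
              Real.exp (-((1+s) * ‖y - (s/(1+s)) • x‖^2)) := by
        intro y
        have hexp : Real.exp (-(‖x - y‖^2 * s)) * Real.exp (-‖y‖^2)
            = Real.exp (-(s*R/(1+s))) * Real.exp (-((1+s) * ‖y - (s/(1+s)) • x‖^2)) := by
          rw [← Real.exp_add, ← Real.exp_add]
          congr 1
          have h := aux_sq_key x y hs0
          rw [hR_def]
          linarith
        calc (Real.Gamma a)⁻¹ * (s^(a-1) * Real.exp (-(‖x - y‖^2 * s)) * Real.exp (-‖y‖^2))
            = ((Real.Gamma a)⁻¹ * s^(a-1)) *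
                (Real.exp (-(‖x - y‖^2 * s)) * Real.exp (-‖y‖^2)) := by ring
          _ = _ := by rw [hexp]; ring
      simp_rw [step]
      rw [← ofReal_integral_eq_lintegral_ofReal
        ((aux_gauss_integrable h1s ((s/(1+s)) • x)).const_mul _)
        (Filter.Eventually.of_forall fun y => by positivity)]
      rw [integral_const_mul, aux_gauss_integral h1s]
      congr 1
      rw [show (n:ℝ)/2 = a+1 from by rw [ha_def]; ring]
      ring
    rw [setLIntegral_congr_fun measurableSet_Ioi L3]
    have hgint : Integrable (fun s : ℝ => (Real.Gamma a)⁻¹ *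
        (s^(a-1) * (π/(1+s))^(a+1) * Real.exp (-(s*R/(1+s))))) (volume.restrict (Ioi 0)) :=
      (aux_g_integrable ha hR).const_mul _
    rw [← ofReal_integral_eq_lintegral_ofReal hgint
      ((ae_restrict_iff' measurableSet_Ioi).2 (Filter.Eventually.of_forall fun s hs => by
        have hs0 : (0:ℝ) < s := hs
        have h1s : (0:ℝ) < 1 + s := by linarith
        positivity))]
    rw [ENNReal.toReal_ofReal (by
      refine setIntegral_nonneg measurableSet_Ioi fun s hs => ?_
      have hs0 : (0:ℝ) < s := hs
      have h1s : (0:ℝ) < 1 + s := by linarith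
      positivity)]
    have hlow : lowerGamma a R = ∫ τ in Ioo (0:ℝ) R, τ^(a-1) * Real.exp (-τ) := by
      rw [lowerGamma, intervalIntegral.integral_of_le hR.le, integral_Ioc_eq_integral_Ioo]
    rw [integral_const_mul, aux_subst ha hR, hlow]
    ring
  rw [key]
  have hπeq : π^((n:ℝ)/2) = π^(a+1) := by
    congr 1
    rw [ha_def]; ring
  have hx2 : R^(-a) = (‖x‖^(n-2))⁻¹ := by
    rw [Real.rpow_neg hR.le]
    congr 1
    rw [hR_def, ha_def]
    exact aux_pow hn ‖x‖ (norm_nonneg x)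
  have hπpos : (0:ℝ) < π^(a+1) := Real.rpow_pos_of_pos pi_pos _
  have hxp : (0:ℝ) < ‖x‖^(n-2) := by positivity
  rw [hπeq, hx2]
  field_simp
end

section
/- The one-dimensional generating function η̃_{2M}(x) = π^{−1/2} L_{M−1}^{(1/2)}(x²) e^{−x²} satisfies the moment conditions: ∫_ℝ η̃_{2M}(x) dx = 1 and ∫_ℝ x^α η̃_{2M}(x) dx = 0 for all integers 1 ≤ α ≤ 2M − 1. -/
open Real MeasureTheory

/-- Generalized Laguerre polynomial via the Rodrigues formula
`L_k^(γ)(y) = (e^y y^(−γ)/k!) (d/dy)^k (e^(−y) y^(k+γ))`. -/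
noncomputable def laguerre (k : ℕ) (γ : ℝ) (y : ℝ) : ℝ :=
  (Real.exp y * y ^ (-γ) / (Nat.factorial k : ℝ)) *
    iteratedDeriv k (fun t : ℝ => Real.exp (-t) * t ^ ((k : ℝ) + γ)) y

/-- Normalized one-dimensional generating function
`η̃_{2M}(x) = π^(−1/2) L_{M−1}^{(1/2)}(x²) e^{−x²}`. -/
noncomputable def etaTildeNorm (M : ℕ) (x : ℝ) : ℝ :=
  π ^ (-(1:ℝ)/2) * laguerre (M - 1) (1/2) (x ^ 2) * Real.exp (-x ^ 2)

open Filter Set Topology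

noncomputable def rod (c : ℝ) : ℝ → ℝ := fun t => Real.exp (-t) * t ^ c

lemma rod_eq (c : ℝ) : rod c = fun t => Real.exp (-t) * t ^ c := rfl

noncomputable def Pnext (a : ℝ) (P : Polynomial ℝ) : Polynomial ℝ :=
  Polynomial.C a * P + Polynomial.X * (Polynomial.derivative P - P)

lemma hasDerivAt_model (a : ℝ) (P : Polynomial ℝ) {y : ℝ} (hy : 0 < y) :
    HasDerivAt (fun t : ℝ => Real.exp (-t) * t ^ a * P.eval t)
      (Real.exp (-y) * y ^ (a - 1) * (Pnext a P).eval y) y := by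
  have h1 : HasDerivAt (fun t : ℝ => Real.exp (-t)) (-Real.exp (-y)) y := by
    simpa using (HasDerivAt.exp (hasDerivAt_neg y))
  have h2 : HasDerivAt (fun t : ℝ => t ^ a) (a * y ^ (a - 1)) y :=
    Real.hasDerivAt_rpow_const (Or.inl hy.ne')
  have h3 : HasDerivAt (fun t : ℝ => P.eval t) (P.derivative.eval y) y := P.hasDerivAt y
  have h : HasDerivAt (fun t : ℝ => Real.exp (-t) * t ^ a * P.eval t) _ y := (h1.fun_mul h2).fun_mul h3
  convert h using 1
  have hy' : y ^ a = y ^ (a - 1) * y := by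
    rw [← Real.rpow_add_one hy.ne' (a - 1)]; ring_nf
  simp only [Pnext, Polynomial.eval_add, Polynomial.eval_mul, Polynomial.eval_C,
    Polynomial.eval_X, Polynomial.eval_sub]
  rw [hy']; ring

lemma iterated_step (c : ℝ) (j : ℕ) (P : Polynomial ℝ)
    (hP : ∀ y : ℝ, 0 < y →
      iteratedDeriv j (rod c) y = Real.exp (-y) * y ^ (c - j) * P.eval y) :
    ∀ y : ℝ, 0 < y → iteratedDeriv (j + 1) (rod c) y
      = Real.exp (-y) * y ^ (c - (j + 1 : ℕ)) * (Pnext (c - j) P).eval y := by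
  intro y hy
  have heq : iteratedDeriv (j + 1) (rod c) y
      = deriv (fun t : ℝ => Real.exp (-t) * t ^ (c - j) * P.eval t) y := by
    rw [iteratedDeriv_succ]
    apply Filter.EventuallyEq.deriv_eq
    filter_upwards [Ioi_mem_nhds hy] with t ht using hP t ht
  rw [heq, (hasDerivAt_model (c - j) P hy).deriv,
    show (c - ((j : ℕ) + 1 : ℕ) : ℝ) = c - (j : ℝ) - 1 by push_cast; ring]

lemma exists_poly (c : ℝ) (j : ℕ) :
    ∃ P : Polynomial ℝ, ∀ y : ℝ, 0 < y →
      iteratedDeriv j (rod c) y = Real.exp (-y) * y ^ (c - j) * P.eval y := by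
  induction j with
  | zero => exact ⟨1, fun y hy => by simp [rod]⟩
  | succ j ih =>
    obtain ⟨P, hP⟩ := ih
    exact ⟨Pnext (c - j) P, iterated_step c j P hP⟩

lemma integrableOn_model (b : ℝ) (hb : 0 < b) (P : Polynomial ℝ) :
    IntegrableOn (fun y : ℝ => Real.exp (-y) * y ^ (b - 1) * P.eval y) (Ioi 0) := by
  have h : IntegrableOn (fun y : ℝ => ∑ i ∈ Finset.range (P.natDegree + 1),
      P.coeff i * (Real.exp (-y) * y ^ (b + i - 1))) (Ioi 0) := by
    apply integrable_finset_sum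
    intro i _
    exact (Real.GammaIntegral_convergent (by positivity : (0:ℝ) < b + i)).const_mul _
  apply h.congr_fun ?_ measurableSet_Ioi
  intro y hy
  simp only []
  symm
  rw [Polynomial.eval_eq_sum_range, Finset.mul_sum]
  apply Finset.sum_congr rfl
  intro i _
  have hrw : y ^ (b + i - 1) = y ^ (b - 1) * y ^ (i : ℕ) := by
    rw [← Real.rpow_natCast y i, ← Real.rpow_add hy]; ring_nf
  rw [hrw]; ring

lemma tendsto_model_atTop (b : ℝ) (P : Polynomial ℝ) :
    Tendsto (fun y : ℝ => Real.exp (-y) * y ^ b * P.eval y) atTop (𝓝 0) := by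
  have h : ∀ i ∈ Finset.range (P.natDegree + 1),
      Tendsto (fun y : ℝ => P.coeff i * (y ^ (b + i) * Real.exp (-(1:ℝ) * y))) atTop
        (𝓝 (P.coeff i * 0)) := fun i _ =>
    (tendsto_rpow_mul_exp_neg_mul_atTop_nhds_zero (b + i) 1 one_pos).const_mul _
  have hsum := tendsto_finset_sum _ h
  simp only [mul_zero, Finset.sum_const_zero] at hsum
  apply hsum.congr'
  filter_upwards [Ioi_mem_atTop (0:ℝ)] with y hy
  have hy0 : (0:ℝ) < y := hy
  rw [Polynomial.eval_eq_sum_range, Finset.mul_sum]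
  apply Finset.sum_congr rfl
  intro i _
  have hrw : y ^ (b + (i:ℝ)) = y ^ b * y ^ (i : ℕ) := by
    rw [← Real.rpow_natCast y i, ← Real.rpow_add hy0]
  rw [hrw]
  simp [Real.exp_neg]
  ring

lemma integrableOn_piece (c : ℝ) (j : ℕ) (n : ℤ) (h : 0 < (n:ℝ) + 1 + c - j) :
    IntegrableOn (fun y : ℝ => y ^ n * iteratedDeriv j (rod c) y) (Ioi 0) := by
  obtain ⟨P, hP⟩ := exists_poly c j
  have hint := integrableOn_model ((n:ℝ) + 1 + c - j) h P
  apply hint.congr_fun ?_ measurableSet_Ioi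
  intro y hy
  have hy0 : (0:ℝ) < y := hy
  simp only []
  rw [hP y hy0]
  have hrw : y ^ ((n:ℝ) + 1 + c - (j:ℝ) - 1) = y ^ (n : ℤ) * y ^ (c - (j:ℝ)) := by
    rw [← Real.rpow_intCast y n, ← Real.rpow_add hy0]; ring_nf
  rw [hrw]; ring

lemma key (c : ℝ) (j : ℕ) (n : ℤ) (hb : 0 < (n:ℝ) + c - j) :
    (∫ y in Ioi (0:ℝ), (y ^ n * iteratedDeriv (j + 1) (rod c) y
      + (n:ℝ) * (y ^ (n - 1) * iteratedDeriv j (rod c) y))) = 0 := by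
  obtain ⟨P, hP⟩ := exists_poly c j
  set b : ℝ := (n:ℝ) + c - j with hbdef
  have hgderiv : ∀ y ∈ Ioi (0:ℝ), HasDerivAt (fun t : ℝ => Real.exp (-t) * t ^ b * P.eval t)
      (Real.exp (-y) * y ^ (b - 1) * (Pnext b P).eval y) y := fun y hy =>
    hasDerivAt_model b P hy
  have hcont : ContinuousWithinAt (fun t : ℝ => Real.exp (-t) * t ^ b * P.eval t) (Ici 0) 0 := by
    apply ContinuousAt.continuousWithinAt
    exact ((Real.continuous_exp.comp continuous_neg).continuousAt.mul
      (Real.continuousAt_rpow_const 0 b (Or.inr hb.le))).mul P.continuous.continuousAt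
  have hint : IntegrableOn (fun y : ℝ => Real.exp (-y) * y ^ (b - 1) * (Pnext b P).eval y)
      (Ioi 0) := integrableOn_model b hb _
  have htop := tendsto_model_atTop b P
  have hftc := integral_Ioi_of_hasDerivAt_of_tendsto hcont hgderiv hint htop
  have hzero : Real.exp (-(0:ℝ)) * (0:ℝ) ^ b * P.eval 0 = 0 := by
    rw [Real.zero_rpow hb.ne']; ring
  rw [hzero, sub_zero] at hftc
  refine Eq.trans ?_ hftc
  apply setIntegral_congr_fun measurableSet_Ioi
  intro y hy
  have hy0 : (0:ℝ) < y := hy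
  simp only []
  rw [iterated_step c j P hP y hy0, hP y hy0]
  have m1 : y ^ (n:ℤ) * y ^ (c - ((j:ℕ) + 1 : ℕ) : ℝ) = y ^ (b - 1) := by
    rw [← Real.rpow_intCast y n, ← Real.rpow_add hy0]
    congr 1; push_cast; rw [hbdef]; ring
  have m2 : y ^ (n - 1 : ℤ) * y ^ (c - (j:ℝ)) = y ^ (b - 1) := by
    rw [← Real.rpow_intCast y (n - 1), ← Real.rpow_add hy0]
    congr 1; push_cast; rw [hbdef]; ring
  calc y ^ (n:ℤ) * (Real.exp (-y) * y ^ (c - ((j:ℕ) + 1 : ℕ) : ℝ) * (Pnext (c - j) P).eval y)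
        + (n:ℝ) * (y ^ (n - 1 : ℤ) * (Real.exp (-y) * y ^ (c - (j:ℝ)) * P.eval y))
      = (y ^ (n:ℤ) * y ^ (c - ((j:ℕ) + 1 : ℕ) : ℝ)) * Real.exp (-y) * (Pnext (c - j) P).eval y
        + (n:ℝ) * ((y ^ (n - 1 : ℤ) * y ^ (c - (j:ℝ))) * Real.exp (-y) * P.eval y) := by ring
    _ = y ^ (b - 1) * Real.exp (-y) * (Pnext (c - j) P).eval y
        + (n:ℝ) * (y ^ (b - 1) * Real.exp (-y) * P.eval y) := by rw [m1, m2]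
    _ = Real.exp (-y) * y ^ (b - 1) * (Pnext b P).eval y := by
        simp only [Pnext, Polynomial.eval_add, Polynomial.eval_mul, Polynomial.eval_C,
          Polynomial.eval_X, Polynomial.eval_sub]
        rw [hbdef]; ring

lemma key' (c : ℝ) (j : ℕ) (n : ℤ) (hb : 0 < (n:ℝ) + c - j) :
    (∫ y in Ioi (0:ℝ), y ^ n * iteratedDeriv (j + 1) (rod c) y)
      = -(n:ℝ) * ∫ y in Ioi (0:ℝ), y ^ (n - 1) * iteratedDeriv j (rod c) y := by
  have hA : IntegrableOn (fun y : ℝ => y ^ n * iteratedDeriv (j + 1) (rod c) y) (Ioi 0) := by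
    apply integrableOn_piece c (j + 1) n; push_cast; linarith
  have hB : IntegrableOn (fun y : ℝ => y ^ (n - 1) * iteratedDeriv j (rod c) y) (Ioi 0) := by
    apply integrableOn_piece c j (n - 1); push_cast; linarith
  have hk := key c j n hb
  rw [integral_add hA (hB.const_mul _), integral_const_mul] at hk
  linarith

lemma mom_zero (c : ℝ) : ∀ n : ℕ, ∀ j : ℕ, n < j → ((j:ℝ) ≤ c + 1/2) →
    (∫ y in Ioi (0:ℝ), y ^ (n:ℤ) * iteratedDeriv j (rod c) y) = 0 := by
  intro n
  induction n with
  | zero =>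
    intro j hj hcj
    obtain ⟨m, rfl⟩ : ∃ m, j = m + 1 := ⟨j - 1, by omega⟩
    simp only [Nat.cast_zero]
    rw [key' c m 0 (by push_cast at hcj ⊢; linarith)]
    simp
  | succ n ih =>
    intro j hj hcj
    obtain ⟨m, rfl⟩ : ∃ m, j = m + 1 := ⟨j - 1, by omega⟩
    simp only [Nat.cast_add, Nat.cast_one]
    rw [key' c m ((n:ℤ) + 1) (by push_cast at hcj ⊢; linarith)]
    have h1 : ((n:ℤ) + 1 - 1) = (n:ℤ) := by ring
    rw [h1, ih m (by omega) (by push_cast at hcj ⊢; linarith)]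
    ring

lemma mom_neg (k : ℕ) : ∀ j : ℕ, j ≤ k →
    (∫ y in Ioi (0:ℝ), y ^ (-1 - ((k - j : ℕ) : ℤ)) * iteratedDeriv j (rod ((k:ℝ) + 1/2)) y)
      = (k.descFactorial j : ℝ) * Real.sqrt π := by
  intro j
  induction j with
  | zero =>
    intro _
    have hval : (∫ y in Ioi (0:ℝ), y ^ (-1 - ((k - 0 : ℕ) : ℤ)) *
        iteratedDeriv 0 (rod ((k:ℝ) + 1/2)) y)
        = ∫ y in Ioi (0:ℝ), Real.exp (-y) * y ^ ((1/2 : ℝ) - 1) := by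
      apply setIntegral_congr_fun measurableSet_Ioi
      intro y hy
      have hy0 : (0:ℝ) < y := hy
      simp only [iteratedDeriv_zero, rod_eq, Nat.sub_zero]
      have hrw : (y : ℝ) ^ (-1 - (k : ℤ)) * y ^ ((k:ℝ) + 1/2) = y ^ ((1/2 : ℝ) - 1) := by
        rw [← Real.rpow_intCast y (-1 - (k:ℤ)), ← Real.rpow_add hy0]
        congr 1; push_cast; ring
      rw [← hrw]; ring
    rw [hval, ← Real.Gamma_eq_integral one_half_pos, Real.Gamma_one_half_eq]
    simp
  | succ j ih =>
    intro hjk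
    have hjk' : j ≤ k := by omega
    have hb : (0:ℝ) < ((-1 - ((k - (j+1) : ℕ) : ℤ) : ℤ) : ℝ) + ((k:ℝ) + 1/2) - j := by
      have : ((k - (j+1) : ℕ) : ℝ) = (k:ℝ) - (j:ℝ) - 1 := by
        rw [Nat.cast_sub hjk]; push_cast; ring
      push_cast
      rw [this]; linarith
    rw [key' ((k:ℝ) + 1/2) j (-1 - ((k - (j+1) : ℕ) : ℤ)) hb]
    have h1 : (-1 - ((k - (j+1) : ℕ) : ℤ) - 1) = -1 - ((k - j : ℕ) : ℤ) := by omega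
    rw [h1, ih hjk']
    have h2 : (-(((-1 - ((k - (j+1) : ℕ) : ℤ)) : ℤ) : ℝ)) = ((k - j : ℕ) : ℝ) := by
      push_cast [Nat.cast_sub hjk, Nat.cast_sub hjk']
      ring
    rw [h2, Nat.descFactorial_succ]
    push_cast [Nat.cast_sub hjk']
    ring

lemma even_moment_eq (k m : ℕ) :
    (∫ x : ℝ, x ^ (2 * m) * etaTildeNorm (k + 1) x)
      = π ^ (-(1:ℝ)/2) * ((k.factorial : ℝ)⁻¹ *
          ∫ y in Ioi (0:ℝ), y ^ ((m:ℤ) - 1) * iteratedDeriv k (rod ((k:ℝ) + 1/2)) y) := by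
  have habs : (∫ x : ℝ, x ^ (2 * m) * etaTildeNorm (k + 1) x)
      = 2 * ∫ x in Ioi (0:ℝ), x ^ (2 * m) * etaTildeNorm (k + 1) x := by
    rw [← integral_comp_abs (f := fun t => t ^ (2 * m) * etaTildeNorm (k + 1) t)]
    congr 1
    funext x
    simp only [etaTildeNorm, sq_abs, (even_two_mul m).pow_abs]
  rw [habs]
  set g : ℝ → ℝ := fun y => (2:ℝ)⁻¹ * (π ^ (-(1:ℝ)/2) * (y ^ ((m:ℝ) - 1/2) *
      (laguerre k (1/2) y * Real.exp (-y)))) with hg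
  have hsub : (∫ x in Ioi (0:ℝ), x ^ (2 * m) * etaTildeNorm (k + 1) x)
      = ∫ y in Ioi (0:ℝ), g y := by
    rw [← integral_comp_rpow_Ioi g (two_ne_zero)]
    apply setIntegral_congr_fun measurableSet_Ioi
    intro x hx
    have hx0 : (0:ℝ) < x := hx
    simp only [hg, smul_eq_mul]
    have hxx : x ^ ((2:ℝ)) = x ^ (2:ℕ) := by rw [← Real.rpow_natCast x 2]; norm_num
    rw [hxx]
    have h1 : ((x ^ (2:ℕ) : ℝ)) ^ ((m:ℝ) - 1/2) = x ^ (2 * (m:ℝ) - 1) := by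
      rw [← Real.rpow_natCast x 2, ← Real.rpow_mul hx0.le]; congr 1; push_cast; ring
    have h2 : x * x ^ (2 * (m:ℝ) - 1) = x ^ (2 * m : ℕ) := by
      nth_rewrite 1 [← Real.rpow_one x]
      rw [← Real.rpow_add hx0, ← Real.rpow_natCast x (2 * m)]
      congr 1; push_cast; ring
    have h3 : x ^ ((2:ℝ) - 1) = x := by
      rw [show ((2:ℝ) - 1) = (1:ℝ) by norm_num, Real.rpow_one]
    rw [h1, h3, abs_of_pos (by norm_num : (0:ℝ) < 2)]
    simp only [etaTildeNorm, Nat.add_sub_cancel]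
    rw [← h2]; ring
  rw [hsub]
  rw [show (2:ℝ) * ∫ y in Ioi (0:ℝ), g y = ∫ y in Ioi (0:ℝ), 2 * g y from
    (integral_const_mul 2 g).symm]
  rw [show π ^ (-(1:ℝ)/2) * ((k.factorial : ℝ)⁻¹ *
      ∫ y in Ioi (0:ℝ), y ^ ((m:ℤ) - 1) * iteratedDeriv k (rod ((k:ℝ) + 1/2)) y)
      = ∫ y in Ioi (0:ℝ), π ^ (-(1:ℝ)/2) * ((k.factorial : ℝ)⁻¹ *
        (y ^ ((m:ℤ) - 1) * iteratedDeriv k (rod ((k:ℝ) + 1/2)) y)) from by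
    rw [integral_const_mul, integral_const_mul]]
  apply setIntegral_congr_fun measurableSet_Ioi
  intro y hy
  have hy0 : (0:ℝ) < y := hy
  simp only [hg, laguerre, rod_eq]
  set D := iteratedDeriv k (fun t : ℝ => Real.exp (-t) * t ^ ((k:ℝ) + 1/2)) y with hDdef
  have he : Real.exp y * Real.exp (-y) = 1 := by
    rw [Real.exp_neg, mul_inv_cancel₀ (Real.exp_ne_zero y)]
  have hp : y ^ ((m:ℝ) - 1/2) * y ^ (-(1/2 : ℝ)) = y ^ (((m:ℤ) - 1 : ℤ)) := by
    rw [← Real.rpow_intCast y ((m:ℤ) - 1), ← Real.rpow_add hy0]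
    congr 1; push_cast; ring
  have expand : 2 * ((2:ℝ)⁻¹ * (π ^ (-(1:ℝ)/2) * (y ^ ((m:ℝ) - 1/2) *
        (Real.exp y * y ^ (-(1/2:ℝ)) / (k.factorial:ℝ) * D * Real.exp (-y)))))
      = π ^ (-(1:ℝ)/2) * ((y ^ ((m:ℝ) - 1/2) * y ^ (-(1/2:ℝ))) * (Real.exp y * Real.exp (-y))
          * ((k.factorial:ℝ)⁻¹ * D)) := by ring
  rw [expand, hp, he]
  ring

lemma odd_moment (M α : ℕ) (hα : Odd α) : (∫ x : ℝ, x ^ α * etaTildeNorm M x) = 0 := by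
  have h1 : (∫ x : ℝ, ((-x) ^ α * etaTildeNorm M (-x))) = ∫ x : ℝ, x ^ α * etaTildeNorm M x :=
    integral_neg_eq_self (fun x : ℝ => x ^ α * etaTildeNorm M x) volume
  have h2 : ∀ x : ℝ, (-x) ^ α * etaTildeNorm M (-x) = -(x ^ α * etaTildeNorm M x) := by
    intro x
    rw [hα.neg_pow]
    have : etaTildeNorm M (-x) = etaTildeNorm M x := by simp [etaTildeNorm, neg_sq]
    rw [this]; ring
  simp only [h2] at h1
  rw [integral_neg] at h1
  linarith

theorem etaTilde_moment_conditions (M : ℕ) (hM : 1 ≤ M) :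
    (∫ x : ℝ, etaTildeNorm M x) = 1 ∧
    ∀ α : ℕ, 1 ≤ α → α ≤ 2 * M - 1 → (∫ x : ℝ, x ^ α * etaTildeNorm M x) = 0 := by
  obtain ⟨k, rfl⟩ : ∃ k, M = k + 1 := ⟨M - 1, by omega⟩
  constructor
  · have h0 := even_moment_eq k 0
    simp only [Nat.mul_zero, pow_zero, one_mul] at h0
    have hmom := mom_neg k k le_rfl
    simp only [Nat.sub_self, Nat.cast_zero, Nat.descFactorial_self] at hmom
    have heq : ((0:ℕ):ℤ) - 1 = -1 - ((0:ℕ):ℤ) := by norm_num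
    rw [h0]
    rw [show ((0:ℕ):ℤ) - 1 = -1 - (((k - k : ℕ)):ℤ) by simp]
    rw [mom_neg k k le_rfl]
    rw [Nat.descFactorial_self]
    have hfac : (k.factorial : ℝ) ≠ 0 := by exact_mod_cast k.factorial_ne_zero
    rw [show (k.factorial:ℝ)⁻¹ * ((k.factorial:ℝ) * Real.sqrt π) = Real.sqrt π by
      field_simp]
    rw [Real.sqrt_eq_rpow, ← Real.rpow_add pi_pos]
    norm_num
  · intro α h1 h2
    rcases Nat.even_or_odd α with he | ho
    · obtain ⟨m, hm⟩ := he
      have hα : α = 2 * m := by omega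
      subst hα
      have hm1 : 1 ≤ m := by omega
      have hmk : m ≤ k := by omega
      rw [even_moment_eq k m]
      rw [show ((m:ℕ):ℤ) - 1 = (((m - 1 : ℕ)):ℤ) by omega]
      rw [mom_zero ((k:ℝ) + 1/2) (m - 1) k (by omega) (by linarith [Nat.cast_nonneg (α := ℝ) k])]
      ring
    · exact odd_moment (k + 1) α ho
end

section
/- For a > 0 and n ≥ 2, the function f(x) = (1/4)∫_0^∞ e^{−a²t/4} e^{−|x|²/(1+t)}/(1+t)^{n/2} dt satisfies −Δf(x) + a² f(x) = e^{−|x|²} for all x ∈ ℝⁿ. -/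
open Real MeasureTheory

/-- The Laplacian on `ℝⁿ` as the sum of second derivatives along coordinate directions. -/
noncomputable def laplacian {n : ℕ} (f : EuclideanSpace ℝ (Fin n) → ℝ)
    (x : EuclideanSpace ℝ (Fin n)) : ℝ :=
  ∑ i : Fin n, iteratedDeriv 2 (fun t : ℝ => f (x + t • EuclideanSpace.single i (1:ℝ))) 0

namespace Yuk
open Real MeasureTheory Set Metric Filter Topology

noncomputable def F (a b c : ℝ) (n : ℕ) (s t : ℝ) : ℝ :=
  Real.exp (-a^2*t/4) * Real.exp (-(c + 2*s*b + s^2)/(1+t)) / (1+t) ^ ((n:ℝ)/2)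

noncomputable def F1 (a b c : ℝ) (n : ℕ) (s t : ℝ) : ℝ :=
  (-(2*b + 2*s)/(1+t)) * F a b c n s t

noncomputable def F2 (a b c : ℝ) (n : ℕ) (s t : ℝ) : ℝ :=
  ((2*b+2*s)^2/(1+t)^2 - 2/(1+t)) * F a b c n s t

lemma F_pos (a b c : ℝ) (n : ℕ) (s t : ℝ) (ht : 0 < t) : 0 < F a b c n s t := by
  have h1 : (0:ℝ) < 1 + t := by linarith
  exact div_pos (mul_pos (exp_pos _) (exp_pos _)) (rpow_pos_of_pos h1 _)

lemma hasDerivAt_F (a b c : ℝ) (n : ℕ) (s t : ℝ) (ht : 0 < t) :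
    HasDerivAt (fun s => F a b c n s t) (F1 a b c n s t) s := by
  have h1 : (0:ℝ) < 1 + t := by linarith
  have hin : HasDerivAt (fun s : ℝ => c + 2*s*b + s^2) (2*b + 2*s) s := by
    have h₁ : HasDerivAt (fun s : ℝ => 2*s*b) (2*b) s := by
      simpa [mul_comm, mul_assoc] using
        (((hasDerivAt_id s).const_mul 2).mul_const b)
    have h₂ : HasDerivAt (fun s : ℝ => s^2) (2*s) s := by
      simpa using hasDerivAt_pow 2 s
    exact ((h₁.const_add c).add h₂)
  have hin2 : HasDerivAt (fun s : ℝ => -(c + 2*s*b + s^2)/(1+t))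
      (-(2*b + 2*s)/(1+t)) s := hin.neg.div_const (1+t)
  have hexp := hin2.exp
  have := (hexp.const_mul (Real.exp (-a^2*t/4))).div_const ((1+t) ^ ((n:ℝ)/2))
  refine this.congr_deriv ?_
  unfold F1 F
  ring

lemma hasDerivAt_F1 (a b c : ℝ) (n : ℕ) (s t : ℝ) (ht : 0 < t) :
    HasDerivAt (fun s => F1 a b c n s t) (F2 a b c n s t) s := by
  have hco : HasDerivAt (fun s : ℝ => -(2*b + 2*s)/(1+t)) (-2/(1+t)) s := by
    have : HasDerivAt (fun s : ℝ => 2*b + 2*s) 2 s := by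
      simpa using (((hasDerivAt_id s).const_mul 2).const_add (2*b))
    exact this.neg.div_const (1+t)
  have := hco.mul (hasDerivAt_F a b c n s t ht)
  have h1 : (1:ℝ) + t ≠ 0 := by linarith
  refine this.congr_deriv ?_
  unfold F2 F1 F
  field_simp
  ring


lemma contOn_F (a b c : ℝ) (n : ℕ) (s : ℝ) :
    ContinuousOn (fun t => F a b c n s t) (Ioi 0) := by
  have hne : ∀ t ∈ Ioi (0:ℝ), (1:ℝ) + t ≠ 0 := fun t ht => by
    have := mem_Ioi.mp ht; linarith
  have h2 : ContinuousOn (fun t : ℝ => -(c + 2*s*b + s^2)/(1+t)) (Ioi 0) :=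
    continuousOn_const.div ((continuous_const.add continuous_id).continuousOn) hne
  have h3 : ContinuousOn (fun t : ℝ => Real.exp (-a^2*t/4)) (Ioi 0) :=
    (Real.continuous_exp.comp (by fun_prop)).continuousOn
  have hden : ContinuousOn (fun t : ℝ => (1+t) ^ ((n:ℝ)/2)) (Ioi 0) :=
    ((by fun_prop : Continuous fun t:ℝ => 1+t)).continuousOn.rpow_const
      (fun t ht => Or.inl (by have := mem_Ioi.mp ht; intro h; linarith))
  exact (h3.mul (Real.continuous_exp.comp_continuousOn h2)).div hden
    (fun t ht => (rpow_pos_of_pos (by have := mem_Ioi.mp ht; linarith) _).ne')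

lemma contOn_F1 (a b c : ℝ) (n : ℕ) (s : ℝ) :
    ContinuousOn (fun t => F1 a b c n s t) (Ioi 0) := by
  have hne : ∀ t ∈ Ioi (0:ℝ), (1:ℝ) + t ≠ 0 := fun t ht => by
    have := mem_Ioi.mp ht; linarith
  exact (continuousOn_const.div
    ((continuous_const.add continuous_id).continuousOn) hne).mul (contOn_F a b c n s)

lemma contOn_F2 (a b c : ℝ) (n : ℕ) (s : ℝ) :
    ContinuousOn (fun t => F2 a b c n s t) (Ioi 0) := by
  have hne : ∀ t ∈ Ioi (0:ℝ), (1:ℝ) + t ≠ 0 := fun t ht => by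
    have := mem_Ioi.mp ht; linarith
  have hne2 : ∀ t ∈ Ioi (0:ℝ), ((1:ℝ) + t)^2 ≠ 0 := fun t ht => pow_ne_zero _ (hne t ht)
  exact ((continuousOn_const.div
      (((continuous_const.add continuous_id).pow 2).continuousOn) hne2).sub
    (continuousOn_const.div
      ((continuous_const.add continuous_id).continuousOn) hne)).mul (contOn_F a b c n s)

/-- crude uniform bound -/
lemma F_le (a b c : ℝ) (n : ℕ) (s t : ℝ) (hs : |s| ≤ 1) (ht : 0 < t) :
    F a b c n s t ≤ exp (|c|+2*|b|+1) * exp (-a^2*t/4) := by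
  have h1 : (0:ℝ) < 1 + t := by linarith
  have hC : 1 ≤ (1+t) ^ ((n:ℝ)/2) := Real.one_le_rpow (by linarith) (by positivity)
  have step1 : F a b c n s t ≤ Real.exp (-a^2*t/4) * Real.exp (-(c + 2*s*b + s^2)/(1+t)) :=
    div_le_self (by positivity) hC
  have habs : |c + 2*s*b + s^2| ≤ |c|+2*|b|+1 := by
    have t1 : |c + 2*s*b + s^2| ≤ |c + 2*s*b| + |s^2| := abs_add_le _ _
    have t2 : |c + 2*s*b| ≤ |c| + |2*s*b| := abs_add_le _ _
    have t3 : |2*s*b| = 2 * |s| * |b| := by rw [abs_mul, abs_mul, abs_two]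
    have t4 : 2 * |s| * |b| ≤ 2*|b| := by nlinarith [abs_nonneg b, abs_nonneg s]
    have t5 : |s^2| ≤ 1 := by rw [abs_pow]; nlinarith [abs_nonneg s]
    linarith
  have hq : -(c + 2*s*b + s^2)/(1+t) ≤ |c|+2*|b|+1 := by
    calc -(c + 2*s*b + s^2)/(1+t) ≤ |c + 2*s*b + s^2|/(1+t) := by
          gcongr
          exact neg_le_abs _
      _ ≤ |c + 2*s*b + s^2| := div_le_self (abs_nonneg _) (by linarith)
      _ ≤ |c|+2*|b|+1 := habs
  calc F a b c n s t ≤ Real.exp (-a^2*t/4) * Real.exp (-(c + 2*s*b + s^2)/(1+t)) := step1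
    _ ≤ Real.exp (-a^2*t/4) * Real.exp (|c|+2*|b|+1) := by
        exact mul_le_mul_of_nonneg_left (exp_le_exp.mpr hq) (exp_nonneg _)
    _ = exp (|c|+2*|b|+1) * exp (-a^2*t/4) := by ring

lemma F1_abs_le (a b c : ℝ) (n : ℕ) (s t : ℝ) (hs : |s| ≤ 1) (ht : 0 < t) :
    |F1 a b c n s t| ≤ (2*|b|+2) * (exp (|c|+2*|b|+1) * exp (-a^2*t/4)) := by
  have h1 : (0:ℝ) < 1 + t := by linarith
  have hFpos := F_pos a b c n s t ht
  have hfac : |(-(2*b + 2*s)/(1+t))| ≤ 2*|b|+2 := by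
    rw [abs_div, abs_neg]
    have h2 : |2*b + 2*s| ≤ 2*|b|+2 := by
      have := abs_add_le (2*b) (2*s)
      have e1 : |2*b| = 2*|b| := by rw [abs_mul, abs_two]
      have e2 : |2*s| = 2*|s| := by rw [abs_mul, abs_two]
      linarith
    calc |2*b + 2*s| / |1+t| ≤ |2*b + 2*s| / 1 :=
          div_le_div_of_nonneg_left (abs_nonneg _) one_pos (by rw [abs_of_pos h1]; linarith)
      _ ≤ 2*|b|+2 := by simpa using h2
  rw [F1, abs_mul]
  exact mul_le_mul hfac (by rw [abs_of_pos hFpos]; exact F_le a b c n s t hs ht)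
    (abs_nonneg _) (by positivity)

lemma F2_abs_le (a b c : ℝ) (n : ℕ) (s t : ℝ) (hs : |s| ≤ 1) (ht : 0 < t) :
    |F2 a b c n s t| ≤ ((2*|b|+2)^2+2) * (exp (|c|+2*|b|+1) * exp (-a^2*t/4)) := by
  have h1 : (0:ℝ) < 1 + t := by linarith
  have h1' : (1:ℝ) ≤ (1+t)^2 := by nlinarith
  have hFpos := F_pos a b c n s t ht
  have h2 : |2*b + 2*s| ≤ 2*|b|+2 := by
    have := abs_add_le (2*b) (2*s)
    have e1 : |2*b| = 2*|b| := by rw [abs_mul, abs_two]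
    have e2 : |2*s| = 2*|s| := by rw [abs_mul, abs_two]
    linarith
  have hfac : |(2*b+2*s)^2/(1+t)^2 - 2/(1+t)| ≤ (2*|b|+2)^2+2 := by
    have k1 : |(2*b+2*s)^2/(1+t)^2| ≤ (2*|b|+2)^2 := by
      rw [abs_div, abs_pow, abs_pow, abs_of_pos h1]
      calc |2*b+2*s|^2 / (1+t)^2 ≤ |2*b+2*s|^2 / 1 :=
            div_le_div_of_nonneg_left (by positivity) one_pos h1' |>.trans le_rfl
        _ ≤ (2*|b|+2)^2 := by
            rw [div_one]
            exact pow_le_pow_left₀ (abs_nonneg _) h2 2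
    have k2 : |2/(1+t)| ≤ 2 := by
      rw [abs_div, abs_of_pos h1, abs_two]
      exact div_le_self (by norm_num) (by linarith)
    calc |(2*b+2*s)^2/(1+t)^2 - 2/(1+t)| ≤ |(2*b+2*s)^2/(1+t)^2| + |2/(1+t)| := abs_sub _ _
      _ ≤ (2*|b|+2)^2+2 := by linarith
  rw [F2, abs_mul]
  exact mul_le_mul hfac (by rw [abs_of_pos hFpos]; exact F_le a b c n s t hs ht)
    (abs_nonneg _) (by positivity)

lemma integrable_bound (a : ℝ) (ha : 0 < a) (k : ℝ) :
    IntegrableOn (fun t => k * exp (-a^2*t/4)) (Ioi (0:ℝ)) := by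
  have h := (exp_neg_integrableOn_Ioi 0 (show (0:ℝ) < a^2/4 by positivity)).const_mul k
  have e : (fun t : ℝ => k * exp (-a^2*t/4)) = fun t => k * exp (-(a^2/4)*t) := by
    funext t; rw [show -a^2*t/4 = -(a^2/4)*t from by ring]
  rw [e]; exact h

lemma meas_F (a b c : ℝ) (n : ℕ) (s : ℝ) :
    AEStronglyMeasurable (fun t => F a b c n s t) (volume.restrict (Ioi 0)) :=
  (contOn_F a b c n s).aestronglyMeasurable measurableSet_Ioi

lemma meas_F1 (a b c : ℝ) (n : ℕ) (s : ℝ) :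
    AEStronglyMeasurable (fun t => F1 a b c n s t) (volume.restrict (Ioi 0)) :=
  (contOn_F1 a b c n s).aestronglyMeasurable measurableSet_Ioi

lemma meas_F2 (a b c : ℝ) (n : ℕ) (s : ℝ) :
    AEStronglyMeasurable (fun t => F2 a b c n s t) (volume.restrict (Ioi 0)) :=
  (contOn_F2 a b c n s).aestronglyMeasurable measurableSet_Ioi

lemma integrable_F (a b c : ℝ) (n : ℕ) (s : ℝ) (ha : 0 < a) (hs : |s| ≤ 1) :
    IntegrableOn (fun t => F a b c n s t) (Ioi (0:ℝ)) := by
  apply Integrable.mono' (integrable_bound a ha (exp (|c|+2*|b|+1))) (meas_F a b c n s)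
  rw [ae_restrict_iff' measurableSet_Ioi]
  filter_upwards with t ht
  rw [Real.norm_eq_abs, abs_of_pos (F_pos a b c n s t ht)]
  exact F_le a b c n s t hs ht

lemma integrable_F1 (a b c : ℝ) (n : ℕ) (s : ℝ) (ha : 0 < a) (hs : |s| ≤ 1) :
    IntegrableOn (fun t => F1 a b c n s t) (Ioi (0:ℝ)) := by
  apply Integrable.mono'
    (integrable_bound a ha ((2*|b|+2) * exp (|c|+2*|b|+1))) (meas_F1 a b c n s)
  rw [ae_restrict_iff' measurableSet_Ioi]
  filter_upwards with t ht
  rw [Real.norm_eq_abs, mul_assoc]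
  exact F1_abs_le a b c n s t hs ht

lemma integrable_F2 (a b c : ℝ) (n : ℕ) (s : ℝ) (ha : 0 < a) (hs : |s| ≤ 1) :
    IntegrableOn (fun t => F2 a b c n s t) (Ioi (0:ℝ)) := by
  apply Integrable.mono'
    (integrable_bound a ha (((2*|b|+2)^2+2) * exp (|c|+2*|b|+1))) (meas_F2 a b c n s)
  rw [ae_restrict_iff' measurableSet_Ioi]
  filter_upwards with t ht
  rw [Real.norm_eq_abs, mul_assoc]
  exact F2_abs_le a b c n s t hs ht

lemma hasDerivAt_intF (a b c : ℝ) (n : ℕ) (ha : 0 < a) (s₀ : ℝ) (hs₀ : s₀ ∈ ball (0:ℝ) 1) :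
    HasDerivAt (fun s => ∫ t in Ioi (0:ℝ), F a b c n s t)
      (∫ t in Ioi (0:ℝ), F1 a b c n s₀ t) s₀ := by
  have hs₀' : |s₀| < 1 := by simpa [Real.dist_eq] using hs₀
  have hε : 0 < 1 - |s₀| := by linarith
  have hsub : ∀ s ∈ ball s₀ (1 - |s₀|), |s| ≤ 1 := by
    intro s hsb
    have : |s - s₀| < 1 - |s₀| := by simpa [Real.dist_eq] using hsb
    have := abs_sub_abs_le_abs_sub s s₀
    linarith
  refine (hasDerivAt_integral_of_dominated_loc_of_deriv_le (ball_mem_nhds s₀ hε)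
    (Eventually.of_forall fun s => meas_F a b c n s)
    (integrable_F a b c n s₀ ha hs₀'.le)
    (meas_F1 a b c n s₀)
    ?_ (integrable_bound a ha ((2*|b|+2) * exp (|c|+2*|b|+1))) ?_).2
  · rw [ae_restrict_iff' measurableSet_Ioi]
    filter_upwards with t ht
    intro s hsb
    rw [Real.norm_eq_abs, mul_assoc]
    exact F1_abs_le a b c n s t (hsub s hsb) ht
  · rw [ae_restrict_iff' measurableSet_Ioi]
    filter_upwards with t ht
    intro s _
    exact hasDerivAt_F a b c n s t ht

lemma hasDerivAt_intF1 (a b c : ℝ) (n : ℕ) (ha : 0 < a) :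
    HasDerivAt (fun s => ∫ t in Ioi (0:ℝ), F1 a b c n s t)
      (∫ t in Ioi (0:ℝ), F2 a b c n 0 t) 0 := by
  refine (hasDerivAt_integral_of_dominated_loc_of_deriv_le (ball_mem_nhds (0:ℝ) one_pos)
    (Eventually.of_forall fun s => meas_F1 a b c n s)
    (integrable_F1 a b c n 0 ha (by norm_num))
    (meas_F2 a b c n 0)
    ?_ (integrable_bound a ha (((2*|b|+2)^2+2) * exp (|c|+2*|b|+1))) ?_).2
  · rw [ae_restrict_iff' measurableSet_Ioi]
    filter_upwards with t ht
    intro s hsb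
    have hs : |s| ≤ 1 := by
      have : |s - 0| < 1 := by simpa [Real.dist_eq] using hsb
      simp at this; linarith [le_of_lt this]
    rw [Real.norm_eq_abs, mul_assoc]
    exact F2_abs_le a b c n s t hs ht
  · rw [ae_restrict_iff' measurableSet_Ioi]
    filter_upwards with t ht
    intro s _
    exact hasDerivAt_F1 a b c n s t ht

lemma secondDeriv (a b c : ℝ) (n : ℕ) (ha : 0 < a) :
    iteratedDeriv 2 (fun s => (1/4 : ℝ) * ∫ t in Ioi (0:ℝ), F a b c n s t) 0
      = (1/4 : ℝ) * ∫ t in Ioi (0:ℝ), F2 a b c n 0 t := by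
  have hder : ∀ s₀ ∈ ball (0:ℝ) 1,
      deriv (fun s => (1/4 : ℝ) * ∫ t in Ioi (0:ℝ), F a b c n s t) s₀
        = (1/4 : ℝ) * ∫ t in Ioi (0:ℝ), F1 a b c n s₀ t := by
    intro s₀ hs₀
    exact ((hasDerivAt_intF a b c n ha s₀ hs₀).const_mul (1/4 : ℝ)).deriv
  have heq : deriv (fun s => (1/4 : ℝ) * ∫ t in Ioi (0:ℝ), F a b c n s t)
      =ᶠ[nhds (0:ℝ)] fun s₀ => (1/4 : ℝ) * ∫ t in Ioi (0:ℝ), F1 a b c n s₀ t := by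
    filter_upwards [ball_mem_nhds (0:ℝ) one_pos] with s₀ hs₀ using hder s₀ hs₀
  rw [iteratedDeriv_succ, iteratedDeriv_one]
  rw [heq.deriv_eq]
  exact ((hasDerivAt_intF1 a b c n ha).const_mul (1/4 : ℝ)).deriv

noncomputable def Phi (a c : ℝ) (n : ℕ) (t : ℝ) : ℝ :=
  Real.exp (-a^2*t/4) * Real.exp (-c/(1+t)) / (1+t) ^ ((n:ℝ)/2)

noncomputable def Phi' (a c : ℝ) (n : ℕ) (t : ℝ) : ℝ :=
  Phi a c n t * (-a^2/4 + c/(1+t)^2 - ((n:ℝ)/2)/(1+t))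

lemma F_zero_eq_Phi (a b c : ℝ) (n : ℕ) (t : ℝ) : F a b c n 0 t = Phi a c n t := by
  unfold F Phi; norm_num

lemma Phi_pos (a c : ℝ) (n : ℕ) (t : ℝ) (ht : 0 < t) : 0 < Phi a c n t := by
  have h1 : (0:ℝ) < 1 + t := by linarith
  exact div_pos (mul_pos (exp_pos _) (exp_pos _)) (rpow_pos_of_pos h1 _)

lemma hasDerivAt_Phi (a c : ℝ) (n : ℕ) (t : ℝ) (ht : -1 < t) :
    HasDerivAt (Phi a c n) (Phi' a c n t) t := by
  have h1 : (0:ℝ) < 1 + t := by linarith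
  have h1' : (1:ℝ) + t ≠ 0 := h1.ne'
  have hP : (0:ℝ) < (1+t) ^ ((n:ℝ)/2) := rpow_pos_of_pos h1 _
  have hA : HasDerivAt (fun t : ℝ => Real.exp (-a^2*t/4))
      (Real.exp (-a^2*t/4) * (-a^2/4)) t := by
    have : HasDerivAt (fun t : ℝ => -a^2*t/4) (-a^2/4) t := by
      simpa using (((hasDerivAt_id t).const_mul (-a^2)).div_const 4)
    exact this.exp
  have hone : HasDerivAt (fun t : ℝ => 1 + t) 1 t := by
    simpa using (hasDerivAt_id t).const_add 1
  have hB : HasDerivAt (fun t : ℝ => Real.exp (-c/(1+t)))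
      (Real.exp (-c/(1+t)) * (c/(1+t)^2)) t := by
    have hin : HasDerivAt (fun t : ℝ => -c/(1+t)) (c/(1+t)^2) t := by
      have h := (hone.inv h1').const_mul (-c)
      have e : (fun t : ℝ => -c/(1+t)) = fun y : ℝ => -c * (1+y)⁻¹ := by
        funext y; rw [div_eq_mul_inv]
      rw [e]
      refine h.congr_deriv ?_
      ring
    exact hin.exp
  have hC : HasDerivAt (fun t : ℝ => (1+t) ^ ((n:ℝ)/2))
      (1 * ((n:ℝ)/2) * (1+t) ^ ((n:ℝ)/2 - 1)) t :=
    hone.rpow_const (Or.inl h1')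
  have := (hA.mul hB).div hC hP.ne'
  refine this.congr_deriv ?_
  simp only [Pi.mul_apply]
  rw [Real.rpow_sub h1, Real.rpow_one]
  unfold Phi' Phi
  field_simp

lemma contWithinAt_Phi (a c : ℝ) (n : ℕ) :
    ContinuousWithinAt (Phi a c n) (Ici (0:ℝ)) 0 :=
  (hasDerivAt_Phi a c n 0 (by norm_num)).continuousAt.continuousWithinAt

lemma Phi_le (a c : ℝ) (n : ℕ) (hc : 0 ≤ c) (t : ℝ) (ht : 0 ≤ t) :
    Phi a c n t ≤ Real.exp (-a^2*t/4) := by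
  have h1 : (0:ℝ) < 1 + t := by linarith
  have hC : 1 ≤ (1+t) ^ ((n:ℝ)/2) := Real.one_le_rpow (by linarith) (by positivity)
  have step1 : Phi a c n t ≤ Real.exp (-a^2*t/4) * Real.exp (-c/(1+t)) :=
    div_le_self (by positivity) hC
  have : Real.exp (-c/(1+t)) ≤ 1 := by
    rw [exp_le_one_iff]
    apply div_nonpos_of_nonpos_of_nonneg <;> linarith
  nlinarith [exp_pos (-a^2*t/4)]

lemma Phi_nonneg (a c : ℝ) (n : ℕ) (t : ℝ) (ht : 0 ≤ t) : 0 ≤ Phi a c n t := by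
  have h1 : (0:ℝ) < 1 + t := by linarith
  exact div_nonneg (by positivity) (Real.rpow_nonneg (by linarith) _)

lemma tendsto_Phi (a c : ℝ) (n : ℕ) (ha : 0 < a) (hc : 0 ≤ c) :
    Tendsto (Phi a c n) atTop (𝓝 0) := by
  apply squeeze_zero' (g := fun t => Real.exp (-a^2*t/4))
  · filter_upwards [eventually_ge_atTop (0:ℝ)] with t ht
    exact Phi_nonneg a c n t ht
  · filter_upwards [eventually_ge_atTop (0:ℝ)] with t ht
    exact Phi_le a c n hc t ht
  · have h2 : Tendsto (fun t : ℝ => (a^2/4)*t) atTop atTop :=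
      Tendsto.const_mul_atTop (by positivity) tendsto_id
    have h3 := tendsto_exp_neg_atTop_nhds_zero.comp h2
    have e : (fun t : ℝ => Real.exp (-a^2*t/4))
        = (fun x : ℝ => Real.exp (-x)) ∘ (fun t : ℝ => (a^2/4)*t) := by
      funext t; simp only [Function.comp_apply]; congr 1; ring
    rw [e]; exact h3

lemma contOn_Phi (a c : ℝ) (n : ℕ) : ContinuousOn (Phi a c n) (Ioi 0) := by
  have h := contOn_F a 0 c n 0
  rwa [show (fun t => F a 0 c n 0 t) = Phi a c n from funext (F_zero_eq_Phi a 0 c n)] at h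

lemma contOn_Phi' (a c : ℝ) (n : ℕ) : ContinuousOn (Phi' a c n) (Ioi 0) := by
  have hne : ∀ t ∈ Ioi (0:ℝ), (1:ℝ) + t ≠ 0 := fun t ht => by
    have := mem_Ioi.mp ht; linarith
  have hne2 : ∀ t ∈ Ioi (0:ℝ), ((1:ℝ) + t)^2 ≠ 0 := fun t ht => pow_ne_zero _ (hne t ht)
  exact (contOn_Phi a c n).mul ((continuousOn_const.add (continuousOn_const.div
    (((continuous_const.add continuous_id).pow 2).continuousOn) hne2)).sub
    (continuousOn_const.div ((continuous_const.add continuous_id).continuousOn) hne))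

lemma integrable_Phi (a c : ℝ) (n : ℕ) (ha : 0 < a) :
    IntegrableOn (Phi a c n) (Ioi (0:ℝ)) := by
  have h := integrable_F a 0 c n 0 ha (by norm_num)
  rwa [show (fun t => F a 0 c n 0 t) = Phi a c n from funext (F_zero_eq_Phi a 0 c n)] at h

lemma integrable_Phi' (a c : ℝ) (n : ℕ) (ha : 0 < a) (hc : 0 ≤ c) :
    IntegrableOn (Phi' a c n) (Ioi (0:ℝ)) := by
  apply Integrable.mono' (integrable_bound a ha (a^2/4 + c + (n:ℝ)/2))
    ((contOn_Phi' a c n).aestronglyMeasurable measurableSet_Ioi)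
  rw [ae_restrict_iff' measurableSet_Ioi]
  filter_upwards with t ht
  have ht' := mem_Ioi.mp ht
  have h1 : (0:ℝ) < 1+t := by linarith
  have hPn := Phi_nonneg a c n t ht'.le
  rw [Real.norm_eq_abs, Phi', abs_mul, abs_of_nonneg hPn]
  have f2 : c/(1+t)^2 ≤ c := div_le_self hc (by nlinarith)
  have f1 : 0 ≤ c/(1+t)^2 := by positivity
  have f4 : ((n:ℝ)/2)/(1+t) ≤ (n:ℝ)/2 := div_le_self (by positivity) (by linarith)
  have f3 : 0 ≤ ((n:ℝ)/2)/(1+t) := by positivity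
  have hb1 : |(-a^2/4 + c/(1+t)^2 - ((n:ℝ)/2)/(1+t))| ≤ a^2/4 + c + (n:ℝ)/2 := by
    rw [abs_le]; constructor <;> [nlinarith; nlinarith]
  calc Phi a c n t * |(-a^2/4 + c/(1+t)^2 - ((n:ℝ)/2)/(1+t))|
      ≤ Phi a c n t * (a^2/4 + c + (n:ℝ)/2) := mul_le_mul_of_nonneg_left hb1 hPn
    _ ≤ Real.exp (-a^2*t/4) * (a^2/4 + c + (n:ℝ)/2) := by
        apply mul_le_mul_of_nonneg_right (Phi_le a c n hc t ht'.le) (by positivity)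
    _ = (a^2/4 + c + (n:ℝ)/2) * Real.exp (-a^2*t/4) := by ring

lemma integral_Phi' (a c : ℝ) (n : ℕ) (ha : 0 < a) (hc : 0 ≤ c) :
    ∫ t in Ioi (0:ℝ), Phi' a c n t = 0 - Phi a c n 0 :=
  integral_Ioi_of_hasDerivAt_of_tendsto (contWithinAt_Phi a c n)
    (fun t ht => hasDerivAt_Phi a c n t (by linarith [mem_Ioi.mp ht]))
    (integrable_Phi' a c n ha hc) (tendsto_Phi a c n ha hc)

lemma Phi_zero (a c : ℝ) (n : ℕ) : Phi a c n 0 = Real.exp (-c) := by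
  unfold Phi
  norm_num

lemma norm_sq_add_smul {n : ℕ} (x : EuclideanSpace ℝ (Fin n)) (i : Fin n) (s : ℝ) :
    ‖x + s • EuclideanSpace.single i (1:ℝ)‖^2 = ‖x‖^2 + 2*s*(x i) + s^2 := by
  rw [norm_add_sq_real, real_inner_smul_right, EuclideanSpace.inner_single_right,
    norm_smul, EuclideanSpace.norm_single]
  simp [mul_pow, sq_abs]
  ring

lemma norm_sq_sum {n : ℕ} (x : EuclideanSpace ℝ (Fin n)) :
    ∑ i : Fin n, (x i)^2 = ‖x‖^2 := by
  rw [EuclideanSpace.norm_eq, Real.sq_sqrt (by positivity)]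
  simp [Real.norm_eq_abs, sq_abs]

end Yuk

open Yuk Set in
theorem yukawa_gaussian_integral_solution (n : ℕ) (hn : 2 ≤ n) (a : ℝ) (ha : 0 < a)
    (x : EuclideanSpace ℝ (Fin n)) :
    -laplacian (fun y : EuclideanSpace ℝ (Fin n) =>
        (1 / 4) * ∫ t in Set.Ioi (0:ℝ),
          Real.exp (-a ^ 2 * t / 4) * Real.exp (-‖y‖ ^ 2 / (1 + t)) /
            (1 + t) ^ ((n : ℝ) / 2)) x +
      a ^ 2 * ((1 / 4) * ∫ t in Set.Ioi (0:ℝ),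
          Real.exp (-a ^ 2 * t / 4) * Real.exp (-‖x‖ ^ 2 / (1 + t)) /
            (1 + t) ^ ((n : ℝ) / 2)) =
      Real.exp (-‖x‖ ^ 2) := by
  have hc : (0:ℝ) ≤ ‖x‖^2 := by positivity
  -- rewrite the Laplacian
  have hlap : laplacian (fun y : EuclideanSpace ℝ (Fin n) =>
        (1 / 4) * ∫ t in Set.Ioi (0:ℝ),
          Real.exp (-a ^ 2 * t / 4) * Real.exp (-‖y‖ ^ 2 / (1 + t)) /
            (1 + t) ^ ((n : ℝ) / 2)) x
      = ∑ i : Fin n, (1/4 : ℝ) * ∫ t in Ioi (0:ℝ), F2 a (x i) (‖x‖^2) n 0 t := by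
    unfold laplacian
    apply Finset.sum_congr rfl
    intro i _
    rw [show (fun s : ℝ => (fun y : EuclideanSpace ℝ (Fin n) =>
        (1 / 4 : ℝ) * ∫ t in Set.Ioi (0:ℝ),
          Real.exp (-a ^ 2 * t / 4) * Real.exp (-‖y‖ ^ 2 / (1 + t)) /
            (1 + t) ^ ((n : ℝ) / 2)) (x + s • EuclideanSpace.single i (1:ℝ)))
        = fun s : ℝ => (1/4 : ℝ) * ∫ t in Ioi (0:ℝ), F a (x i) (‖x‖^2) n s t from ?_]
    · exact secondDeriv a (x i) (‖x‖^2) n ha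
    · funext s
      simp only
      congr 1
      congr 1
      funext t
      rw [norm_sq_add_smul x i s]
      rfl
  rw [hlap]
  have hint2 : ∀ i : Fin n, IntegrableOn (fun t => F2 a (x i) (‖x‖^2) n 0 t) (Ioi (0:ℝ)) :=
    fun i => integrable_F2 a (x i) (‖x‖^2) n 0 ha (by norm_num)
  rw [← Finset.mul_sum, ← integral_finset_sum _ (fun i _ => hint2 i)]
  have e2 : (∫ t in Set.Ioi (0:ℝ),
      Real.exp (-a ^ 2 * t / 4) * Real.exp (-‖x‖ ^ 2 / (1 + t)) /
        (1 + t) ^ ((n : ℝ) / 2)) = ∫ t in Ioi (0:ℝ), Phi a (‖x‖^2) n t := rfl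
  rw [e2]
  have hG : IntegrableOn (fun t => ∑ i : Fin n, F2 a (x i) (‖x‖^2) n 0 t) (Ioi (0:ℝ)) :=
    integrable_finset_sum _ (fun i _ => hint2 i)
  have hPhiInt := integrable_Phi a (‖x‖^2) n ha
  -- pointwise identity on Ioi 0
  have hptw : ∀ t ∈ Ioi (0:ℝ),
      a^2 * Phi a (‖x‖^2) n t - ∑ i : Fin n, F2 a (x i) (‖x‖^2) n 0 t
        = -4 * Phi' a (‖x‖^2) n t := by
    intro t ht
    have ht' := mem_Ioi.mp ht
    have h1 : (0:ℝ) < 1+t := by linarith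
    have hexp : ∀ i : Fin n, F2 a (x i) (‖x‖^2) n 0 t
        = ((2*(x i))^2/(1+t)^2 - 2/(1+t)) * Phi a (‖x‖^2) n t := by
      intro i; rw [F2, F_zero_eq_Phi]; norm_num
    rw [Finset.sum_congr rfl (fun i _ => hexp i), ← Finset.sum_mul]
    have hs2 : ∑ i : Fin n, ((2*(x i))^2/(1+t)^2 - 2/(1+t))
        = 4*‖x‖^2/(1+t)^2 - 2*(n:ℝ)/(1+t) := by
      rw [Finset.sum_sub_distrib, Finset.sum_const, Finset.card_univ, Fintype.card_fin]
      congr 1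
      · rw [← Finset.sum_div]
        congr 1
        rw [← norm_sq_sum x, Finset.mul_sum]
        exact Finset.sum_congr rfl (fun i _ => by ring)
      · rw [nsmul_eq_mul]; ring
    rw [hs2]
    unfold Phi'
    ring
  have hIeq : ∫ t in Ioi (0:ℝ),
      (a^2 * Phi a (‖x‖^2) n t - ∑ i : Fin n, F2 a (x i) (‖x‖^2) n 0 t)
        = ∫ t in Ioi (0:ℝ), (-4) * Phi' a (‖x‖^2) n t :=
    setIntegral_congr_fun measurableSet_Ioi hptw
  have hsplit : ∫ t in Ioi (0:ℝ),
      (a^2 * Phi a (‖x‖^2) n t - ∑ i : Fin n, F2 a (x i) (‖x‖^2) n 0 t)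
        = a^2 * (∫ t in Ioi (0:ℝ), Phi a (‖x‖^2) n t)
          - ∫ t in Ioi (0:ℝ), ∑ i : Fin n, F2 a (x i) (‖x‖^2) n 0 t := by
    rw [integral_sub (hPhiInt.const_mul _) hG, integral_const_mul]
  have hfin : ∫ t in Ioi (0:ℝ), (-4) * Phi' a (‖x‖^2) n t = 4 * Real.exp (-‖x‖^2) := by
    rw [integral_const_mul, integral_Phi' a (‖x‖^2) n ha hc, Phi_zero]
    ring
  have := hsplit.symm.trans (hIeq.trans hfin)
  linarith
end
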